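/- arXiv:2010.15898 — 3 statements merged into one kernel-verified Lean document; each statement's English description precedes it below -/
import Mathlib

section
/- Let U ⊆ ℝ² be an open set that is star-shaped with respect to one of its points, and let f : ℝ² → ℝ² be continuously differentiable on U. Then f is divergence-free on U (i.e., ∂₁f₁(x) + ∂₂f₂(x) = 0 for all x ∈ U) if and only if there exists a twice continuously differentiable scalar potential ψ : ℝ² → ℝ such that f(x) = L(ψ)(x) = (−∂₂ψ(x), ∂₁ψ(x)) for all x ∈ U. -/
set_option maxHeartbeats 2000000

open EuclideanSpace Set MeasureTheory intervalIntegral Topology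
open scoped Interval

/-- Partial derivative in coordinate direction `i`. -/
noncomputable def pd (i : Fin 2) (f : EuclideanSpace ℝ (Fin 2) → ℝ)
    (x : EuclideanSpace ℝ (Fin 2)) : ℝ :=
  fderiv ℝ f x (EuclideanSpace.single i 1)


namespace PL
noncomputable section

abbrev E2 := EuclideanSpace ℝ (Fin 2)

def e (i : Fin 2) : E2 := EuclideanSpace.single i 1

lemma abs_coord_le (v : E2) (i : Fin 2) : |v i| ≤ ‖v‖ := by
  rw [EuclideanSpace.norm_eq]
  calc |v i| = Real.sqrt (|v i|^2) := by rw [Real.sqrt_sq_eq_abs, abs_abs]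
  _ ≤ _ := by
      apply Real.sqrt_le_sqrt
      exact Finset.single_le_sum (f := fun j => |v j|^2) (fun j _ => by positivity)
        (Finset.mem_univ i)

lemma norm_proj_le (i : Fin 2) : ‖(EuclideanSpace.proj i : E2 →L[ℝ] ℝ)‖ ≤ 1 :=
  ContinuousLinearMap.opNorm_le_bound _ zero_le_one fun v => by
    simpa using abs_coord_le v i

lemma proj_apply (i : Fin 2) (v : E2) : (EuclideanSpace.proj i : E2 →L[ℝ] ℝ) v = v i := rfl

lemma decomp (v : E2) : v = v 0 • e 0 + v 1 • e 1 := by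
  ext j; fin_cases j <;> simp [e, EuclideanSpace.single_apply]

def γ (p x : E2) (t : ℝ) : E2 := p + t • (x - p)

lemma γ_coord (p x : E2) (t : ℝ) (i : Fin 2) : γ p x t i = p i + t * (x i - p i) := by
  simp [γ, PiLp.add_apply, PiLp.smul_apply, PiLp.sub_apply, smul_eq_mul]

lemma γ_one (p x : E2) : γ p x 1 = x := by simp [γ]

lemma γ_mem {U : Set E2} {p : E2} (hstar : ∀ x ∈ U, segment ℝ p x ⊆ U)
    {x : E2} (hx : x ∈ U) {t : ℝ} (ht : t ∈ Icc (0:ℝ) 1) : γ p x t ∈ U := by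
  apply hstar x hx
  rw [segment_eq_image']
  exact ⟨t, ht, rfl⟩

variable {U : Set E2} {p : E2} {f : E2 → E2}

/-- integrand -/
def F (p : E2) (f : E2 → E2) (x : E2) (t : ℝ) : ℝ :=
  (x 0 - p 0) * f (γ p x t) 1 - (x 1 - p 1) * f (γ p x t) 0

def ψ (p : E2) (f : E2 → E2) (x : E2) : ℝ := ∫ t in (0:ℝ)..1, F p f x t

def D (f : E2 → E2) (i : Fin 2) (y : E2) : E2 →L[ℝ] ℝ := fderiv ℝ (fun z => f z i) y

/-- x-derivative of the integrand -/
def F' (p : E2) (f : E2 → E2) (x : E2) (t : ℝ) : E2 →L[ℝ] ℝ :=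
  ((x 0 - p 0) • (t • D f 1 (γ p x t)) + f (γ p x t) 1 • (EuclideanSpace.proj 0 : E2 →L[ℝ] ℝ))
  - ((x 1 - p 1) • (t • D f 0 (γ p x t)) + f (γ p x t) 0 • (EuclideanSpace.proj 1 : E2 →L[ℝ] ℝ))

lemma comp_contDiffOn (hf : ContDiffOn ℝ 1 f U) (i : Fin 2) :
    ContDiffOn ℝ 1 (fun z => f z i) U :=
  (EuclideanSpace.proj i : E2 →L[ℝ] ℝ).contDiff.comp_contDiffOn hf

lemma hasFDerivAt_comp (hU : IsOpen U) (hf : ContDiffOn ℝ 1 f U) (i : Fin 2)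
    {y : E2} (hy : y ∈ U) : HasFDerivAt (fun z => f z i) (D f i y) y :=
  (((comp_contDiffOn hf i) y hy).contDiffAt (hU.mem_nhds hy)).differentiableAt one_ne_zero
    |>.hasFDerivAt

lemma D_contOn (hU : IsOpen U) (hf : ContDiffOn ℝ 1 f U) (i : Fin 2) :
    ContinuousOn (D f i) U := by
  have h : ContDiffOn ℝ (0 + 1) (fun z => f z i) U := by
    simpa using comp_contDiffOn hf i
  exact ((contDiffOn_succ_iff_fderiv_of_isOpen hU).1 h).2.2.continuousOn

lemma hasFDerivAt_F (hU : IsOpen U) (hstar : ∀ x ∈ U, segment ℝ p x ⊆ U)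
    (hf : ContDiffOn ℝ 1 f U) {x : E2} (hx : x ∈ U) {t : ℝ} (ht : t ∈ Icc (0:ℝ) 1) :
    HasFDerivAt (fun x => F p f x t) (F' p f x t) x := by
  have hγmem : γ p x t ∈ U := γ_mem hstar hx ht
  have hγ : HasFDerivAt (fun x : E2 => γ p x t) (t • ContinuousLinearMap.id ℝ E2) x := by
    have h1 : HasFDerivAt (fun x : E2 => x - p) (ContinuousLinearMap.id ℝ E2) x :=
      (hasFDerivAt_id x).sub_const p
    exact (h1.const_smul t).const_add p
  have hcomp : ∀ i : Fin 2, HasFDerivAt (fun x : E2 => f (γ p x t) i)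
      (t • D f i (γ p x t)) x := by
    intro i
    have := (hasFDerivAt_comp hU hf i hγmem).comp x hγ
    refine this.congr_fderiv ?_
    ext v
    simp [ContinuousLinearMap.smul_apply]
  have hc : ∀ i : Fin 2, HasFDerivAt (fun x : E2 => x i - p i)
      (EuclideanSpace.proj i : E2 →L[ℝ] ℝ) x :=
    fun i => ((EuclideanSpace.proj i : E2 →L[ℝ] ℝ).hasFDerivAt).sub_const (p i)
  exact ((hc 0).mul (hcomp 1)).sub ((hc 1).mul (hcomp 0))


lemma contOn_γt (x : E2) : Continuous (fun t : ℝ => γ p x t) := by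
  unfold γ; fun_prop

lemma mapsTo_γt (hstar : ∀ x ∈ U, segment ℝ p x ⊆ U) {x : E2} (hx : x ∈ U) :
    MapsTo (fun t : ℝ => γ p x t) (Icc 0 1) U := fun t ht => γ_mem hstar hx ht

lemma F_contOn_t (hU : IsOpen U) (hstar : ∀ x ∈ U, segment ℝ p x ⊆ U)
    (hf : ContDiffOn ℝ 1 f U) {x : E2} (hx : x ∈ U) :
    ContinuousOn (fun t => F p f x t) (Icc 0 1) := by
  have hfc : ∀ i : Fin 2, ContinuousOn (fun t : ℝ => f (γ p x t) i) (Icc 0 1) := by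
    intro i
    exact ((comp_contDiffOn hf i).continuousOn.comp (contOn_γt x).continuousOn
      (mapsTo_γt hstar hx))
  exact (continuousOn_const.sub continuousOn_const).mul (hfc 1) |>.sub
    ((continuousOn_const.sub continuousOn_const).mul (hfc 0)) |>.congr
    (fun t _ => rfl) |>.mono (subset_refl _)

lemma F'_contOn_t (hU : IsOpen U) (hstar : ∀ x ∈ U, segment ℝ p x ⊆ U)
    (hf : ContDiffOn ℝ 1 f U) {x : E2} (hx : x ∈ U) :
    ContinuousOn (fun t => F' p f x t) (Icc 0 1) := by
  have hfc : ∀ i : Fin 2, ContinuousOn (fun t : ℝ => f (γ p x t) i) (Icc 0 1) := fun i =>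
    ((comp_contDiffOn hf i).continuousOn.comp (contOn_γt x).continuousOn
      (mapsTo_γt hstar hx))
  have hDc : ∀ i : Fin 2, ContinuousOn (fun t : ℝ => D f i (γ p x t)) (Icc 0 1) := fun i =>
    (D_contOn hU hf i).comp (contOn_γt x).continuousOn (mapsTo_γt hstar hx)
  unfold F'
  have h1 := (continuousOn_const (c := x 0 - p 0)).smul (continuousOn_id.smul (hDc 1))
  have h2 := (hfc 1).smul (continuousOn_const (c := (EuclideanSpace.proj 0 : E2 →L[ℝ] ℝ)))
  have h3 := (continuousOn_const (c := x 1 - p 1)).smul (continuousOn_id.smul (hDc 0))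
  have h4 := (hfc 0).smul (continuousOn_const (c := (EuclideanSpace.proj 1 : E2 →L[ℝ] ℝ)))
  exact (h1.add h2).sub (h3.add h4)

/-- uniform bound for `F'` on a small ball -/
lemma exists_bound (hU : IsOpen U) (hstar : ∀ x ∈ U, segment ℝ p x ⊆ U)
    (hf : ContDiffOn ℝ 1 f U) {x₀ : E2} (hx₀ : x₀ ∈ U) :
    ∃ ε > 0, Metric.ball x₀ ε ⊆ U ∧ ∃ M : ℝ,
      ∀ t ∈ Icc (0:ℝ) 1, ∀ x ∈ Metric.ball x₀ ε, ‖F' p f x t‖ ≤ M := by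
  obtain ⟨ε, hε, hball⟩ := Metric.isOpen_iff.1 hU x₀ hx₀
  refine ⟨ε/2, by linarith, (Metric.ball_subset_ball (by linarith)).trans hball, ?_⟩
  -- compact set of curve points
  set K : Set E2 := (fun q : ℝ × E2 => γ p q.2 q.1) '' (Icc 0 1 ×ˢ Metric.closedBall x₀ (ε/2))
    with hK
  have hKcomp : IsCompact K :=
    (isCompact_Icc.prod (isCompact_closedBall x₀ (ε/2))).image (by unfold γ; fun_prop)
  have hKU : K ⊆ U := by
    rintro - ⟨⟨t, x⟩, ⟨ht, hx⟩, rfl⟩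
    exact γ_mem hstar (hball (Metric.closedBall_subset_ball (by linarith) hx)) ht
  obtain ⟨C₀, hC₀⟩ := hKcomp.exists_bound_of_continuousOn (hf.continuousOn.mono hKU)
  obtain ⟨C₁, hC₁⟩ := hKcomp.exists_bound_of_continuousOn ((D_contOn hU hf 1).mono hKU)
  obtain ⟨C₂, hC₂⟩ := hKcomp.exists_bound_of_continuousOn ((D_contOn hU hf 0).mono hKU)
  set R : ℝ := ‖x₀ - p‖ + ε
  have hC₀0 : 0 ≤ C₀ := le_trans (norm_nonneg _) (hC₀ _ ⟨(0, x₀), ⟨⟨le_rfl, zero_le_one⟩,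
    Metric.mem_closedBall_self (by linarith)⟩, rfl⟩)
  refine ⟨R * C₁ + C₀ + (R * C₂ + C₀), ?_⟩
  intro t ht x hx
  have hxU : x ∈ U := hball (Metric.ball_subset_ball (by linarith) hx)
  have hmem : γ p x t ∈ K := ⟨(t, x), ⟨ht, Metric.ball_subset_closedBall hx⟩, rfl⟩
  have hcoord : ∀ i : Fin 2, |x i - p i| ≤ R := by
    intro i
    calc |x i - p i| = |(x - p) i| := by simp [PiLp.sub_apply]
    _ ≤ ‖x - p‖ := abs_coord_le _ i
    _ ≤ ‖x - x₀‖ + ‖x₀ - p‖ := by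
        simpa using norm_sub_le_norm_sub_add_norm_sub x x₀ p
    _ ≤ R := by
        have := Metric.mem_ball.1 hx
        rw [dist_eq_norm] at this
        simp only [R]; linarith
  have hfcoord : ∀ i : Fin 2, |f (γ p x t) i| ≤ C₀ := fun i =>
    le_trans (abs_coord_le _ i) (hC₀ _ hmem)
  have ht1 : |t| ≤ 1 := by rw [abs_of_nonneg ht.1]; exact ht.2
  have hD1 : ‖D f 1 (γ p x t)‖ ≤ C₁ := hC₁ _ hmem
  have hD2 : ‖D f 0 (γ p x t)‖ ≤ C₂ := hC₂ _ hmem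
  have key : ∀ (a b t' : ℝ) (T P : E2 →L[ℝ] ℝ) (Ca Cb : ℝ), |a| ≤ R → |t'| ≤ 1 → ‖T‖ ≤ Ca →
      |b| ≤ Cb → ‖P‖ ≤ 1 → ‖a • (t' • T) + b • P‖ ≤ R * Ca + Cb := by
    intro a b t' T P Ca Cb ha htt hT hb hP
    have hCa : (0:ℝ) ≤ Ca := le_trans (norm_nonneg T) hT
    have hR0 : (0:ℝ) ≤ R := le_trans (abs_nonneg a) ha
    have h1 : ‖a • (t' • T)‖ ≤ R * Ca := by
      have e1 : ‖a • (t' • T)‖ ≤ ‖a‖ * ‖t' • T‖ := ContinuousLinearMap.opNorm_smul_le _ _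
      have e1' : ‖t' • T‖ ≤ ‖t'‖ * ‖T‖ := ContinuousLinearMap.opNorm_smul_le _ _
      simp only [Real.norm_eq_abs] at e1 e1'
      have e2 : |t'| * ‖T‖ ≤ 1 * Ca := mul_le_mul htt hT (norm_nonneg T) zero_le_one
      have e3 : |a| * ‖t' • T‖ ≤ R * Ca := by
        apply mul_le_mul ha (by linarith) (norm_nonneg _) hR0
      linarith
    have h2 : ‖b • P‖ ≤ Cb := by
      have e2 : ‖b • P‖ ≤ ‖b‖ * ‖P‖ := ContinuousLinearMap.opNorm_smul_le _ _
      simp only [Real.norm_eq_abs] at e2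
      have hCb : (0:ℝ) ≤ Cb := le_trans (abs_nonneg b) hb
      have : |b| * ‖P‖ ≤ Cb * 1 := mul_le_mul hb hP (norm_nonneg P) hCb
      linarith
    calc ‖a • (t' • T) + b • P‖ ≤ ‖a • (t' • T)‖ + ‖b • P‖ := norm_add_le _ _
    _ ≤ R * Ca + Cb := add_le_add h1 h2
  rw [F']
  exact le_trans (norm_sub_le _ _) (add_le_add
    (key _ _ _ _ _ _ _ (hcoord 0) ht1 hD1 (hfcoord 1) (norm_proj_le 0))
    (key _ _ _ _ _ _ _ (hcoord 1) ht1 hD2 (hfcoord 0) (norm_proj_le 1)))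

lemma div_identity (hdiv : ∀ x ∈ U, pd 0 (fun y => f y 0) x + pd 1 (fun y => f y 1) x = 0)
    {y : E2} (hy : y ∈ U) : D f 0 y (e 0) + D f 1 y (e 1) = 0 := hdiv y hy

lemma D_decomp (y : E2) (i : Fin 2) (v : E2) :
    D f i y v = v 0 * D f i y (e 0) + v 1 * D f i y (e 1) := by
  conv_lhs => rw [decomp v]
  simp

lemma hasDerivAt_t (hU : IsOpen U) (hstar : ∀ x ∈ U, segment ℝ p x ⊆ U)
    (hf : ContDiffOn ℝ 1 f U) {x₀ : E2} (hx₀ : x₀ ∈ U) {t : ℝ} (ht : t ∈ Icc (0:ℝ) 1)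
    (i : Fin 2) :
    HasDerivAt (fun t : ℝ => t * f (γ p x₀ t) i)
      (f (γ p x₀ t) i + t * (D f i (γ p x₀ t) (x₀ - p))) t := by
  have hγmem := γ_mem hstar hx₀ ht
  have hγ : HasDerivAt (fun t : ℝ => γ p x₀ t) (x₀ - p) t := by
    have h1 : HasDerivAt (fun t : ℝ => t • (x₀ - p)) ((1:ℝ) • (x₀ - p)) t :=
      (hasDerivAt_id t).smul_const _
    simpa [γ] using h1.const_add p
  have hg : HasDerivAt (fun t : ℝ => f (γ p x₀ t) i) (D f i (γ p x₀ t) (x₀ - p)) t :=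
    (hasFDerivAt_comp hU hf i hγmem).comp_hasDerivAt t hγ
  have := (hasDerivAt_id' t).fun_mul hg
  simpa only [one_mul] using this

lemma F'_apply_e0 (hU : IsOpen U) (hstar : ∀ x ∈ U, segment ℝ p x ⊆ U)
    (hf : ContDiffOn ℝ 1 f U)
    (hdiv : ∀ x ∈ U, pd 0 (fun y => f y 0) x + pd 1 (fun y => f y 1) x = 0)
    {x₀ : E2} (hx₀ : x₀ ∈ U) {t : ℝ} (ht : t ∈ Icc (0:ℝ) 1) :
    F' p f x₀ t (e 0) = f (γ p x₀ t) 1 + t * (D f 1 (γ p x₀ t) (x₀ - p)) := by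
  have hγmem := γ_mem hstar hx₀ ht
  have hdid := div_identity hdiv hγmem
  have hdec := D_decomp (f := f) (γ p x₀ t) 1 (x₀ - p)
  have hsub : ∀ i : Fin 2, (x₀ - p) i = x₀ i - p i := fun i => rfl
  simp only [F', ContinuousLinearMap.sub_apply, ContinuousLinearMap.add_apply,
    ContinuousLinearMap.smul_apply, smul_eq_mul, proj_apply]
  rw [hdec, hsub 0, hsub 1]
  have he00 : e 0 0 = (1:ℝ) := by simp [e]
  have he01 : (e 0) 1 = (0:ℝ) := by simp [e, EuclideanSpace.single_apply]
  rw [he00, he01]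
  linear_combination (-(x₀ 1 - p 1)) * t * hdid

lemma F'_apply_e1 (hU : IsOpen U) (hstar : ∀ x ∈ U, segment ℝ p x ⊆ U)
    (hf : ContDiffOn ℝ 1 f U)
    (hdiv : ∀ x ∈ U, pd 0 (fun y => f y 0) x + pd 1 (fun y => f y 1) x = 0)
    {x₀ : E2} (hx₀ : x₀ ∈ U) {t : ℝ} (ht : t ∈ Icc (0:ℝ) 1) :
    F' p f x₀ t (e 1) = -(f (γ p x₀ t) 0 + t * (D f 0 (γ p x₀ t) (x₀ - p))) := by
  have hγmem := γ_mem hstar hx₀ ht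
  have hdid := div_identity hdiv hγmem
  have hdec := D_decomp (f := f) (γ p x₀ t) 0 (x₀ - p)
  have hsub : ∀ i : Fin 2, (x₀ - p) i = x₀ i - p i := fun i => rfl
  simp only [F', ContinuousLinearMap.sub_apply, ContinuousLinearMap.add_apply,
    ContinuousLinearMap.smul_apply, smul_eq_mul, proj_apply]
  rw [hdec, hsub 0, hsub 1]
  have he10 : e 1 0 = (0:ℝ) := by simp [e, EuclideanSpace.single_apply]
  have he11 : (e 1) 1 = (1:ℝ) := by simp [e]
  rw [he10, he11]
  linear_combination ((x₀ 0 - p 0)) * t * hdid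

lemma F'_apply_contOn (hU : IsOpen U) (hstar : ∀ x ∈ U, segment ℝ p x ⊆ U)
    (hf : ContDiffOn ℝ 1 f U) {x₀ : E2} (hx₀ : x₀ ∈ U) (v : E2) :
    ContinuousOn (fun t => F' p f x₀ t v) (Icc 0 1) :=
  (ContinuousLinearMap.apply ℝ ℝ v).continuous.comp_continuousOn
    (F'_contOn_t hU hstar hf hx₀)

lemma F'_apply_integrable (hU : IsOpen U) (hstar : ∀ x ∈ U, segment ℝ p x ⊆ U)
    (hf : ContDiffOn ℝ 1 f U) {x₀ : E2} (hx₀ : x₀ ∈ U) (v : E2) :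
    IntervalIntegrable (fun t => F' p f x₀ t v) volume 0 1 :=
  ContinuousOn.intervalIntegrable (by
    rw [uIcc_of_le zero_le_one]; exact F'_apply_contOn hU hstar hf hx₀ v)

lemma integral_F'_e0 (hU : IsOpen U) (hstar : ∀ x ∈ U, segment ℝ p x ⊆ U)
    (hf : ContDiffOn ℝ 1 f U)
    (hdiv : ∀ x ∈ U, pd 0 (fun y => f y 0) x + pd 1 (fun y => f y 1) x = 0)
    {x₀ : E2} (hx₀ : x₀ ∈ U) :
    ∫ t in (0:ℝ)..1, F' p f x₀ t (e 0) = f x₀ 1 := by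
  have h := intervalIntegral.integral_eq_sub_of_hasDerivAt
    (f := fun t : ℝ => t * f (γ p x₀ t) 1) (f' := fun t => F' p f x₀ t (e 0))
    (fun t ht => by
      rw [uIcc_of_le zero_le_one] at ht
      have h1 := hasDerivAt_t hU hstar hf hx₀ ht 1
      rw [← F'_apply_e0 hU hstar hf hdiv hx₀ ht] at h1
      exact h1)
    (F'_apply_integrable hU hstar hf hx₀ (e 0))
  rw [h]
  simp [γ_one]

lemma integral_F'_e1 (hU : IsOpen U) (hstar : ∀ x ∈ U, segment ℝ p x ⊆ U)
    (hf : ContDiffOn ℝ 1 f U)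
    (hdiv : ∀ x ∈ U, pd 0 (fun y => f y 0) x + pd 1 (fun y => f y 1) x = 0)
    {x₀ : E2} (hx₀ : x₀ ∈ U) :
    ∫ t in (0:ℝ)..1, F' p f x₀ t (e 1) = -(f x₀ 0) := by
  have h := intervalIntegral.integral_eq_sub_of_hasDerivAt
    (f := fun t : ℝ => -(t * f (γ p x₀ t) 0)) (f' := fun t => F' p f x₀ t (e 1))
    (fun t ht => by
      rw [uIcc_of_le zero_le_one] at ht
      have h1 := (hasDerivAt_t hU hstar hf hx₀ ht 0).neg
      rw [← F'_apply_e1 hU hstar hf hdiv hx₀ ht] at h1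
      exact h1)
    (F'_apply_integrable hU hstar hf hx₀ (e 1))
  rw [h]
  simp [γ_one]

/-- the claimed derivative of ψ -/
def Dmap (f : E2 → E2) (x : E2) : E2 →L[ℝ] ℝ :=
  f x 1 • (EuclideanSpace.proj 0 : E2 →L[ℝ] ℝ) - f x 0 • (EuclideanSpace.proj 1 : E2 →L[ℝ] ℝ)

lemma hasFDerivAt_ψ (hU : IsOpen U) (hstar : ∀ x ∈ U, segment ℝ p x ⊆ U)
    (hf : ContDiffOn ℝ 1 f U)
    (hdiv : ∀ x ∈ U, pd 0 (fun y => f y 0) x + pd 1 (fun y => f y 1) x = 0)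
    {x₀ : E2} (hx₀ : x₀ ∈ U) :
    HasFDerivAt (ψ p f) (Dmap f x₀) x₀ := by
  obtain ⟨ε, hε, hballU, M, hM⟩ := exists_bound hU hstar hf hx₀
  have huIoc : Ι (0:ℝ) 1 ⊆ Icc 0 1 := by
    rw [uIoc_of_le zero_le_one]; exact Ioc_subset_Icc_self
  have hmeas : ∀ᶠ x in 𝓝 x₀, AEStronglyMeasurable (F p f x) (volume.restrict (Ι (0:ℝ) 1)) := by
    filter_upwards [hU.mem_nhds hx₀] with x hx
    exact ((F_contOn_t hU hstar hf hx).mono huIoc).aestronglyMeasurable measurableSet_uIoc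
  have hint : IntervalIntegrable (F p f x₀) volume 0 1 :=
    ContinuousOn.intervalIntegrable (by
      rw [uIcc_of_le zero_le_one]; exact F_contOn_t hU hstar hf hx₀)
  have h'meas : AEStronglyMeasurable (F' p f x₀) (volume.restrict (Ι (0:ℝ) 1)) :=
    ((F'_contOn_t hU hstar hf hx₀).mono huIoc).aestronglyMeasurable measurableSet_uIoc
  have h_bound : ∀ᵐ t ∂volume, t ∈ Ι (0:ℝ) 1 → ∀ x ∈ Metric.ball x₀ ε,
      ‖F' p f x t‖ ≤ M := ae_of_all _ fun t ht x hx => hM t (huIoc ht) x hx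
  have h_diff : ∀ᵐ t ∂volume, t ∈ Ι (0:ℝ) 1 → ∀ x ∈ Metric.ball x₀ ε,
      HasFDerivAt (fun x => F p f x t) (F' p f x t) x :=
    ae_of_all _ fun t ht x hx => hasFDerivAt_F hU hstar hf (hballU hx) (huIoc ht)
  have H := intervalIntegral.hasFDerivAt_integral_of_dominated_of_fderiv_le (Metric.ball_mem_nhds x₀ hε) hmeas hint
    h'meas h_bound intervalIntegrable_const h_diff
  have hFi : IntervalIntegrable (F' p f x₀) volume 0 1 :=
    ContinuousOn.intervalIntegrable (by
      rw [uIcc_of_le zero_le_one]; exact F'_contOn_t hU hstar hf hx₀)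
  have hval : (∫ t in (0:ℝ)..1, F' p f x₀ t) = Dmap f x₀ := by
    apply ContinuousLinearMap.ext
    intro v
    rw [ContinuousLinearMap.intervalIntegral_apply hFi v]
    have hexp : ∀ t, F' p f x₀ t v =
        v 0 * (F' p f x₀ t (e 0)) + v 1 * (F' p f x₀ t (e 1)) := by
      intro t
      conv_lhs => rw [decomp v]
      simp
    simp_rw [hexp]
    rw [intervalIntegral.integral_add
      ((F'_apply_integrable hU hstar hf hx₀ (e 0)).const_mul _)
      ((F'_apply_integrable hU hstar hf hx₀ (e 1)).const_mul _),
      intervalIntegral.integral_const_mul, intervalIntegral.integral_const_mul,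
      integral_F'_e0 hU hstar hf hdiv hx₀, integral_F'_e1 hU hstar hf hdiv hx₀]
    simp [Dmap, ContinuousLinearMap.sub_apply, ContinuousLinearMap.smul_apply,
      proj_apply, smul_eq_mul]
    ring
  rw [hval] at H
  exact H

lemma e_apply : (e 0 0 = (1:ℝ)) ∧ (e 0 1 = (0:ℝ)) ∧ (e 1 0 = (0:ℝ)) ∧ (e 1 1 = (1:ℝ)) := by
  refine ⟨by simp [e], ?_, ?_, by simp [e]⟩ <;> simp [e, EuclideanSpace.single_apply]

lemma contDiffOn_ψ (hU : IsOpen U) (hstar : ∀ x ∈ U, segment ℝ p x ⊆ U)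
    (hf : ContDiffOn ℝ 1 f U)
    (hdiv : ∀ x ∈ U, pd 0 (fun y => f y 0) x + pd 1 (fun y => f y 1) x = 0) :
    ContDiffOn ℝ 2 (ψ p f) U := by
  have h2 : ((1 : WithTop ℕ∞) + 1) = 2 := by norm_num
  rw [← h2, contDiffOn_succ_iff_fderiv_of_isOpen hU]
  refine ⟨fun x hx =>
    (hasFDerivAt_ψ hU hstar hf hdiv hx).differentiableAt.differentiableWithinAt, ?_, ?_⟩
  · intro h; simp at h
  · have hD : ContDiffOn ℝ 1 (Dmap f) U :=
      ((comp_contDiffOn hf 1).smul contDiffOn_const).sub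
        ((comp_contDiffOn hf 0).smul contDiffOn_const)
    exact hD.congr fun x hx => (hasFDerivAt_ψ hU hstar hf hdiv hx).fderiv

lemma pd_ψ (hU : IsOpen U) (hstar : ∀ x ∈ U, segment ℝ p x ⊆ U)
    (hf : ContDiffOn ℝ 1 f U)
    (hdiv : ∀ x ∈ U, pd 0 (fun y => f y 0) x + pd 1 (fun y => f y 1) x = 0)
    {x : E2} (hx : x ∈ U) :
    f x 0 = -(pd 1 (ψ p f) x) ∧ f x 1 = pd 0 (ψ p f) x := by
  have hD := (hasFDerivAt_ψ hU hstar hf hdiv hx).fderiv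
  obtain ⟨h00, h01, h10, h11⟩ := e_apply
  have hpd : ∀ i : Fin 2, pd i (ψ p f) x = Dmap f x (e i) := by
    intro i; rw [pd, hD]; rfl
  constructor
  · rw [hpd 1]
    simp only [Dmap, ContinuousLinearMap.sub_apply, ContinuousLinearMap.smul_apply,
      proj_apply, smul_eq_mul, h10, h11]
    ring
  · rw [hpd 0]
    simp only [Dmap, ContinuousLinearMap.sub_apply, ContinuousLinearMap.smul_apply,
      proj_apply, smul_eq_mul, h00, h01]
    ring

/-- the easy (reverse) direction -/
lemma reverse (hU : IsOpen U) {ψ₀ : E2 → ℝ} (hψ : ContDiffOn ℝ 2 ψ₀ U)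
    (hfe : ∀ y ∈ U, f y 0 = -(pd 1 ψ₀ y) ∧ f y 1 = pd 0 ψ₀ y)
    {x : E2} (hx : x ∈ U) :
    pd 0 (fun y => f y 0) x + pd 1 (fun y => f y 1) x = 0 := by
  have hUx : U ∈ 𝓝 x := hU.mem_nhds hx
  have hdiffψ : ∀ᶠ y in 𝓝 x, HasFDerivAt ψ₀ (fderiv ℝ ψ₀ y) y := by
    filter_upwards [hUx] with y hy
    exact (((hψ y hy).contDiffAt (hU.mem_nhds hy)).differentiableAt
      (by norm_num)).hasFDerivAt
  have hC1 : ContDiffAt ℝ 1 (fderiv ℝ ψ₀) x :=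
    ((hψ x hx).contDiffAt hUx).fderiv_right (by norm_num)
  have hf'' : HasFDerivAt (fderiv ℝ ψ₀) (fderiv ℝ (fderiv ℝ ψ₀) x) x :=
    (hC1.differentiableAt one_ne_zero).hasFDerivAt
  have hsymm := second_derivative_symmetric_of_eventually hdiffψ hf''
    (EuclideanSpace.single 0 1) (EuclideanSpace.single 1 1)
  have happ : ∀ v : E2, fderiv ℝ (fun y => fderiv ℝ ψ₀ y v) x
      = (ContinuousLinearMap.apply ℝ ℝ v).comp (fderiv ℝ (fderiv ℝ ψ₀) x) :=
    fun v => (((ContinuousLinearMap.apply ℝ ℝ v).hasFDerivAt).comp x hf'').fderiv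
  have h0 : (fun y => f y 0) =ᶠ[𝓝 x] (fun y => -(pd 1 ψ₀ y)) := by
    filter_upwards [hUx] with y hy; exact (hfe y hy).1
  have h1 : (fun y => f y 1) =ᶠ[𝓝 x] (fun y => pd 0 ψ₀ y) := by
    filter_upwards [hUx] with y hy; exact (hfe y hy).2
  rw [pd, pd, h0.fderiv_eq, h1.fderiv_eq]
  simp only [pd]
  rw [fderiv_fun_neg, happ (EuclideanSpace.single 1 1), happ (EuclideanSpace.single 0 1)]
  simp only [ContinuousLinearMap.neg_apply, ContinuousLinearMap.comp_apply,
    ContinuousLinearMap.apply_apply]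
  rw [hsymm]
  ring

end
end PL

/-- Poincaré's Lemma in the plane: on an open star-shaped set, a C¹ vector field is
divergence-free iff it is the rotated gradient `L(ψ) = (−∂₂ψ, ∂₁ψ)` of a C² potential. -/
theorem divfree_iff_exists_potential
    (U : Set (EuclideanSpace ℝ (Fin 2))) (hU : IsOpen U)
    (p : EuclideanSpace ℝ (Fin 2)) (hp : p ∈ U)
    (hstar : ∀ x ∈ U, segment ℝ p x ⊆ U)
    (f : EuclideanSpace ℝ (Fin 2) → EuclideanSpace ℝ (Fin 2))
    (hf : ContDiffOn ℝ 1 f U) :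
    (∀ x ∈ U, pd 0 (fun y => f y 0) x + pd 1 (fun y => f y 1) x = 0) ↔
      ∃ ψ : EuclideanSpace ℝ (Fin 2) → ℝ, ContDiffOn ℝ 2 ψ U ∧
        ∀ x ∈ U, f x 0 = -(pd 1 ψ x) ∧ f x 1 = pd 0 ψ x := by
  constructor
  · intro hdiv
    exact ⟨PL.ψ p f, PL.contDiffOn_ψ hU hstar hf hdiv,
      fun x hx => PL.pd_ψ hU hstar hf hdiv hx⟩
  · rintro ⟨ψ₀, hψ, hfe⟩ x hx
    exact PL.reverse hU hψ hfe hx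
end

section
/- Let U ⊆ ℝ^d be an open set that is star-shaped with respect to one of its points, and let f : ℝ^d → ℝ^d be continuously differentiable on U. Then the Jacobian of f is symmetric at every point of U (i.e., for all x ∈ U and all vectors v, w, ⟨Df(x)v, w⟩ = ⟨Df(x)w, v⟩, which is the curl-free condition) if and only if there exists a scalar potential φ : ℝ^d → ℝ, twice continuously differentiable on U, such that f(x) = ∇φ(x) for all x ∈ U. -/
open RealInnerProductSpace Metric Set intervalIntegral MeasureTheory

variable {d : ℕ}

-- Easy direction: gradients of C² functions are curl-free.
theorem curlfree_of_potential
    (U : Set (EuclideanSpace ℝ (Fin d))) (hU : IsOpen U)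
    (f : EuclideanSpace ℝ (Fin d) → EuclideanSpace ℝ (Fin d))
    (φ : EuclideanSpace ℝ (Fin d) → ℝ) (hφ : ContDiffOn ℝ 2 φ U)
    (hgrad : ∀ x ∈ U, f x = gradient φ x)
    (x : EuclideanSpace ℝ (Fin d)) (hx : x ∈ U)
    (v w : EuclideanSpace ℝ (Fin d)) :
    ⟪fderiv ℝ f x v, w⟫ = ⟪fderiv ℝ f x w, v⟫ := by
  set F : EuclideanSpace ℝ (Fin d) → (EuclideanSpace ℝ (Fin d) →L[ℝ] ℝ) := fderiv ℝ φ with hF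
  have hUx : U ∈ nhds x := hU.mem_nhds hx
  have hφd : DifferentiableOn ℝ φ U := hφ.differentiableOn (by norm_num)
  have hdφ : ∀ᶠ y in nhds x, HasFDerivAt φ (F y) y := by
    filter_upwards [hU.eventually_mem hx] with y hy
    exact (hφd.differentiableAt (hU.mem_nhds hy)).hasFDerivAt
  have hF1 : ContDiffOn ℝ 1 F U := by
    have := (contDiffOn_succ_iff_fderiv_of_isOpen (n := 1) hU).1 (by exact_mod_cast hφ)
    exact this.2.2
  have hFd : DifferentiableAt ℝ F x :=
    (hF1.differentiableOn (by norm_num)).differentiableAt hUx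
  have hF'' : HasFDerivAt F (fderiv ℝ F x) x := hFd.hasFDerivAt
  have hsymm : ∀ v w : EuclideanSpace ℝ (Fin d), fderiv ℝ F x v w = fderiv ℝ F x w v :=
    second_derivative_symmetric_of_eventually hdφ hF''
  -- f agrees near x with toDual.symm ∘ F
  set e : (EuclideanSpace ℝ (Fin d) →L[ℝ] ℝ) ≃L[ℝ] EuclideanSpace ℝ (Fin d) :=
    (InnerProductSpace.toDual ℝ (EuclideanSpace ℝ (Fin d))).symm.toContinuousLinearEquiv with he
  have hfe : f =ᶠ[nhds x] fun y => e (F y) := by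
    filter_upwards [hU.eventually_mem hx] with y hy
    rw [hgrad y hy]
    rfl
  have hfD : HasFDerivAt f ((e : (EuclideanSpace ℝ (Fin d) →L[ℝ] ℝ) →L[ℝ]
      EuclideanSpace ℝ (Fin d)).comp (fderiv ℝ F x)) x := by
    have : HasFDerivAt (fun y => e (F y)) ((e : (EuclideanSpace ℝ (Fin d) →L[ℝ] ℝ) →L[ℝ]
        EuclideanSpace ℝ (Fin d)).comp (fderiv ℝ F x)) x :=
      (e : (EuclideanSpace ℝ (Fin d) →L[ℝ] ℝ) →L[ℝ]
        EuclideanSpace ℝ (Fin d)).hasFDerivAt.comp x hF''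
    exact this.congr_of_eventuallyEq hfe
  rw [hfD.fderiv]
  have key : ∀ u z : EuclideanSpace ℝ (Fin d),
      ⟪(e : (EuclideanSpace ℝ (Fin d) →L[ℝ] ℝ) →L[ℝ] EuclideanSpace ℝ (Fin d))
        ((fderiv ℝ F x) u), z⟫ = fderiv ℝ F x u z := by
    intro u z
    have h : ⟪(InnerProductSpace.toDual ℝ (EuclideanSpace ℝ (Fin d))).symm
        ((fderiv ℝ F x) u), z⟫ = (fderiv ℝ F x u) z :=
      InnerProductSpace.toDual_symm_apply
    simpa [he] using h
  exact (key v w).trans ((hsymm v w).trans (key w v).symm)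


set_option maxHeartbeats 1000000 in
theorem exists_potential_of_curlfree {d : ℕ}
    (U : Set (EuclideanSpace ℝ (Fin d))) (hU : IsOpen U)
    (p : EuclideanSpace ℝ (Fin d)) (hp : p ∈ U)
    (hstar : ∀ x ∈ U, segment ℝ p x ⊆ U)
    (f : EuclideanSpace ℝ (Fin d) → EuclideanSpace ℝ (Fin d))
    (hf : ContDiffOn ℝ 1 f U)
    (hsym : ∀ x ∈ U, ∀ v w : EuclideanSpace ℝ (Fin d),
        ⟪fderiv ℝ f x v, w⟫ = ⟪fderiv ℝ f x w, v⟫) :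
    ∃ φ : EuclideanSpace ℝ (Fin d) → ℝ, ContDiffOn ℝ 2 φ U ∧
        ∀ x ∈ U, f x = gradient φ x := by
  classical
  have hseg : ∀ y ∈ U, ∀ t ∈ Icc (0:ℝ) 1, p + t • (y - p) ∈ U := by
    intro y hy t ht
    apply hstar y hy
    rw [segment_eq_image']
    exact ⟨t, ht, rfl⟩
  have hfc : ContinuousOn f U := hf.continuousOn
  have hf'c : ContinuousOn (fderiv ℝ f) U := hf.continuousOn_fderiv_of_isOpen hU le_rfl
  have hfd : ∀ z ∈ U, HasFDerivAt f (fderiv ℝ f z) z := fun z hz =>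
    ((hf.differentiableOn one_ne_zero).differentiableAt (hU.mem_nhds hz)).hasFDerivAt
  set φ : EuclideanSpace ℝ (Fin d) → ℝ := fun x => ∫ t in (0:ℝ)..1, ⟪f (p + t • (x - p)), x - p⟫ with hφdef
  -- the key derivative computation
  have key : ∀ x ∈ U, HasFDerivAt φ (innerSL ℝ (f x)) x := by
    intro x hx
    obtain ⟨ε, εpos, hball⟩ : ∃ ε > 0, closedBall x ε ⊆ U :=
      (Metric.nhds_basis_closedBall.mem_iff).1 (hU.mem_nhds hx)
    have hmem : ∀ y ∈ closedBall x ε, ∀ t ∈ Icc (0:ℝ) 1, p + t • (y - p) ∈ U :=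
      fun y hy t ht => hseg y (hball hy) t ht
    -- compact set of segment points and bounds
    set K : Set (EuclideanSpace ℝ (Fin d)) := (fun q : ℝ × EuclideanSpace ℝ (Fin d) => p + q.1 • (q.2 - p)) '' (Icc (0:ℝ) 1 ×ˢ closedBall x ε)
      with hK
    have hKcomp : IsCompact K :=
      ((isCompact_Icc).prod (isCompact_closedBall x ε)).image (by fun_prop)
    have hKU : K ⊆ U := by
      rintro _ ⟨⟨t, y⟩, ⟨ht, hy⟩, rfl⟩
      exact hmem y hy t ht
    obtain ⟨M₁, hM₁⟩ := hKcomp.exists_bound_of_continuousOn (hfc.mono hKU)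
    obtain ⟨M₂, hM₂⟩ := hKcomp.exists_bound_of_continuousOn (hf'c.mono hKU)
    set M : ℝ := max M₁ M₂ with hM
    set R : ℝ := ‖x - p‖ + ε with hR
    have hRpos : 0 ≤ R := by positivity
    -- the integrand and its x-derivative
    set F : EuclideanSpace ℝ (Fin d) → ℝ → ℝ := fun y t => ⟪f (p + t • (y - p)), y - p⟫ with hFdef
    set F' : EuclideanSpace ℝ (Fin d) → ℝ → (EuclideanSpace ℝ (Fin d) →L[ℝ] ℝ) := fun y t =>
      (innerSL ℝ (y - p)).comp (t • fderiv ℝ f (p + t • (y - p)))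
        + innerSL ℝ (f (p + t • (y - p))) with hF'def
    have hline : ∀ y : EuclideanSpace ℝ (Fin d),
        Continuous (fun t : ℝ => p + t • (y - p)) := by
      intro y; fun_prop
    have hcont : ∀ y ∈ closedBall x ε, ContinuousOn (fun t => f (p + t • (y - p))) (Icc (0:ℝ) 1) := by
      intro y hy
      exact ContinuousOn.comp hfc ((hline y).continuousOn) (fun t ht => hmem y hy t ht)
    have hcont' : ∀ y ∈ closedBall x ε,
        ContinuousOn (fun t => fderiv ℝ f (p + t • (y - p))) (Icc (0:ℝ) 1) := by
      intro y hy
      exact ContinuousOn.comp hf'c ((hline y).continuousOn) (fun t ht => hmem y hy t ht)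
    have hIsub : uIoc (0:ℝ) 1 ⊆ Icc 0 1 := by
      rw [uIoc_of_le (zero_le_one)]
      exact Ioc_subset_Icc_self
    have hI'sub : uIcc (0:ℝ) 1 ⊆ Icc 0 1 := by
      rw [uIcc_of_le (zero_le_one)]
    -- continuity of F y in t
    have hFcont : ∀ y ∈ closedBall x ε, ContinuousOn (F y) (Icc (0:ℝ) 1) := by
      intro y hy
      exact ContinuousOn.inner (𝕜 := ℝ) (hcont y hy)
        (continuousOn_const : ContinuousOn (fun _ => y - p) (Icc (0:ℝ) 1))
    have hF'cont : ContinuousOn (F' x) (Icc (0:ℝ) 1) := by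
      have hx' : x ∈ closedBall x ε := mem_closedBall_self εpos.le
      apply ContinuousOn.add
      · refine continuousOn_const.clm_comp ?_
        exact ContinuousOn.smul (continuous_id.continuousOn : ContinuousOn (fun t : ℝ => t) _)
          (hcont' x hx')
      · exact ((innerSL ℝ (E := EuclideanSpace ℝ (Fin d))).continuous).comp_continuousOn (hcont x hx')
    -- differentiability in y
    have hdiff : ∀ t ∈ Icc (0:ℝ) 1, ∀ y ∈ ball x ε, HasFDerivAt (F · t) (F' y t) y := by
      intro t ht y hy
      have hyU : y ∈ closedBall x ε := ball_subset_closedBall hy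
      set c := p + t • (y - p) with hc
      have hcU : c ∈ U := hmem y hyU t ht
      have h₁ : HasFDerivAt (fun y' : EuclideanSpace ℝ (Fin d) => p + t • (y' - p))
          (t • ContinuousLinearMap.id ℝ (EuclideanSpace ℝ (Fin d))) y :=
        (((hasFDerivAt_id y).sub_const p).const_smul t).const_add p
      have h₂ : HasFDerivAt f (fderiv ℝ f c) c := hfd c hcU
      have h₃ := h₂.comp y h₁
      have h₄ : HasFDerivAt (fun y' : EuclideanSpace ℝ (Fin d) => y' - p) (ContinuousLinearMap.id ℝ (EuclideanSpace ℝ (Fin d))) y :=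
        (hasFDerivAt_id y).sub_const p
      have h₅ := h₃.inner ℝ h₄
      refine h₅.congr_fderiv (Eq.symm ?_)
      ext v
      simp only [hF'def, ContinuousLinearMap.add_apply, ContinuousLinearMap.coe_comp',
        Function.comp_apply, innerSL_apply_apply, ContinuousLinearMap.smul_apply,
        fderivInnerCLM_apply, ContinuousLinearMap.prod_apply, ContinuousLinearMap.coe_id',
        id_eq, ContinuousLinearMap.map_smul]
      rw [← hc, real_inner_smul_left, real_inner_comm]
      simp only [smul_eq_mul]
      exact add_comm _ _
    -- the bound
    have hbound : ∀ t ∈ Icc (0:ℝ) 1, ∀ y ∈ ball x ε, ‖F' y t‖ ≤ R * M + M := by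
      intro t ht y hy
      have hyc : y ∈ closedBall x ε := ball_subset_closedBall hy
      have hcK : p + t • (y - p) ∈ K := ⟨(t, y), ⟨ht, hyc⟩, rfl⟩
      have hyp : ‖y - p‖ ≤ R := by
        calc ‖y - p‖ = ‖(y - x) + (x - p)‖ := by abel_nf
        _ ≤ ‖y - x‖ + ‖x - p‖ := norm_add_le _ _
        _ ≤ ε + ‖x - p‖ := by
            have := mem_closedBall_iff_norm.1 hyc
            linarith
        _ = R := by rw [hR]; ring
      have ht1 : |t| ≤ 1 := by
        rw [abs_le]; constructor <;> linarith [ht.1, ht.2]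
      have hfb : ‖f (p + t • (y - p))‖ ≤ M := le_trans (hM₁ _ hcK) (le_max_left _ _)
      have hf'b : ‖fderiv ℝ f (p + t • (y - p))‖ ≤ M := le_trans (hM₂ _ hcK) (le_max_right _ _)
      have hM0 : 0 ≤ M := le_trans (norm_nonneg _) hfb
      calc ‖F' y t‖ ≤ ‖(innerSL ℝ (y - p)).comp (t • fderiv ℝ f (p + t • (y - p)))‖
            + ‖innerSL ℝ (f (p + t • (y - p)))‖ := norm_add_le _ _
        _ ≤ ‖innerSL ℝ (y - p)‖ * ‖t • fderiv ℝ f (p + t • (y - p))‖ + M := by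
            gcongr
            · exact ContinuousLinearMap.opNorm_comp_le _ _
            · rw [innerSL_apply_norm]; exact hfb
        _ ≤ R * M + M := by
            gcongr
            rw [innerSL_apply_norm]
            · exact hyp
            rw [norm_smul]
            calc ‖t‖ * ‖fderiv ℝ f (p + t • (y - p))‖ ≤ 1 * M := by
                  apply mul_le_mul ht1 hf'b (norm_nonneg _) zero_le_one
              _ = M := one_mul M
    -- differentiate under the integral sign
    have main : HasFDerivAt φ (∫ t in (0:ℝ)..1, F' x t) x := by
      apply hasFDerivAt_integral_of_dominated_of_fderiv_le'' (F := F)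
        (bound := fun _ => R * M + M) (ball_mem_nhds x εpos)
      · filter_upwards [closedBall_mem_nhds x εpos] with y hy
        exact ((hFcont y hy).mono hIsub).aestronglyMeasurable measurableSet_uIoc
      · exact ((hFcont x (mem_closedBall_self εpos.le)).mono hI'sub).intervalIntegrable
      · exact (hF'cont.mono hIsub).aestronglyMeasurable measurableSet_uIoc
      · exact ae_restrict_of_forall_mem measurableSet_uIoc fun t ht => hbound t (hIsub ht)
      · exact intervalIntegrable_const
      · exact ae_restrict_of_forall_mem measurableSet_uIoc fun t ht y hy =>
          hdiff t (hIsub ht) y hy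
    -- identify the derivative
    have hFint : IntervalIntegrable (F' x) volume 0 1 :=
      (hF'cont.mono hI'sub).intervalIntegrable
    have hderiv_eq : (∫ t in (0:ℝ)..1, F' x t) = innerSL ℝ (f x) := by
      ext v
      rw [ContinuousLinearMap.intervalIntegral_apply hFint]
      set g : ℝ → ℝ := fun t => t * ⟪f (p + t • (x - p)), v⟫ with hg
      have hgd : ∀ t ∈ uIcc (0:ℝ) 1, HasDerivAt g (F' x t v) t := by
        intro t ht
        have htI : t ∈ Icc (0:ℝ) 1 := hI'sub ht
        set c := p + t • (x - p) with hc
        have hcU : c ∈ U := hmem x (mem_closedBall_self εpos.le) t htI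
        have hcd : HasDerivAt (fun s : ℝ => p + s • (x - p)) (x - p) t := by
          simpa using ((hasDerivAt_id t).smul_const (x - p)).const_add p
        have hfcd : HasDerivAt (fun s : ℝ => f (p + s • (x - p)))
            ((fderiv ℝ f c) (x - p)) t := (hfd c hcU).comp_hasDerivAt t hcd
        have hinner : HasDerivAt (fun s : ℝ => ⟪f (p + s • (x - p)), v⟫)
            ⟪(fderiv ℝ f c) (x - p), v⟫ t := by
          simpa using hfcd.inner ℝ (hasDerivAt_const t v)
        have hprod := (hasDerivAt_id t).mul hinner
        have : F' x t v = 1 * ⟪f c, v⟫ + t * ⟪(fderiv ℝ f c) (x - p), v⟫ := by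
          have hs := hsym c hcU v (x - p)
          simp only [hF'def, ContinuousLinearMap.add_apply, ContinuousLinearMap.coe_comp',
            Function.comp_apply, innerSL_apply_apply, ContinuousLinearMap.smul_apply,
            real_inner_smul_right, one_mul]
          rw [← hc, real_inner_comm, hs]
          ring
        rw [this]
        simpa [hg, hc, Pi.mul_def] using hprod
      have hIg : IntervalIntegrable (fun t => F' x t v) volume 0 1 :=
        ((hF'cont.clm_apply continuousOn_const).mono hI'sub).intervalIntegrable
      rw [intervalIntegral.integral_eq_sub_of_hasDerivAt hgd hIg]
      simp [hg]
    rw [hderiv_eq] at main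
    exact main
  refine ⟨φ, ?_, ?_⟩
  · -- C² regularity
    have h1 : ContDiffOn ℝ ((1 : WithTop ℕ∞) + 1) φ U := by
      rw [contDiffOn_succ_iff_fderiv_of_isOpen hU]
      refine ⟨fun y hy => ((key y hy).differentiableAt).differentiableWithinAt,
        by simp, ?_⟩
      have hcongr : ∀ y ∈ U, fderiv ℝ φ y = innerSL ℝ (f y) := fun y hy => (key y hy).fderiv
      exact (((innerSL ℝ (E := EuclideanSpace ℝ (Fin d))).contDiff).comp_contDiffOn hf).congr
        fun y hy => hcongr y hy
    exact_mod_cast h1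
  · intro x hx
    have h := (key x hx).hasGradientAt
    rw [h.gradient]
    have hdual : (InnerProductSpace.toDual ℝ (EuclideanSpace ℝ (Fin d))) (f x)
        = innerSL ℝ (f x) := by
      ext v
      simp [InnerProductSpace.toDual_apply_apply]
    rw [← hdual, LinearIsometryEquiv.symm_apply_apply]

/-- Poincaré's Lemma for curl-free fields in `ℝᵈ`: on an open star-shaped set, a C¹ vector
field has symmetric Jacobian everywhere (is curl-free) iff it is the gradient of a scalar
potential that is C² on the set. -/
theorem curlfree_iff_exists_potential (d : ℕ)
    (U : Set (EuclideanSpace ℝ (Fin d))) (hU : IsOpen U)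
    (p : EuclideanSpace ℝ (Fin d)) (hp : p ∈ U)
    (hstar : ∀ x ∈ U, segment ℝ p x ⊆ U)
    (f : EuclideanSpace ℝ (Fin d) → EuclideanSpace ℝ (Fin d))
    (hf : ContDiffOn ℝ 1 f U) :
    (∀ x ∈ U, ∀ v w : EuclideanSpace ℝ (Fin d),
        ⟪fderiv ℝ f x v, w⟫ = ⟪fderiv ℝ f x w, v⟫) ↔
      ∃ φ : EuclideanSpace ℝ (Fin d) → ℝ, ContDiffOn ℝ 2 φ U ∧
        ∀ x ∈ U, f x = gradient φ x := by
  constructor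
  · intro hsym
    exact exists_potential_of_curlfree U hU p hp hstar f hf hsym
  · rintro ⟨φ, hφ, hgrad⟩ x hx v w
    exact curlfree_of_potential U hU f φ hφ hgrad x hx v w
end

section
/- Let Ω ⊆ ℝ^d be open and x ∈ Ω. Let Ω₁, …, Ω_M ⊆ ℝ^d be open patches, and let w₁, …, w_M : ℝ^d → ℝ be differentiable with Σ_{ℓ=1}^M w_ℓ ≡ 1 on Ω, w_ℓ ≥ 0, and with the closed support of w_ℓ contained in Ω_ℓ (so w_ℓ and ∇w_ℓ vanish outside Ω_ℓ); assume ‖∇w_ℓ(x)‖ ≤ C_ℓ. Let φ₁, …, φ_M : ℝ^d → ℝ be differentiable, let u(x) ∈ ℝ^d, and suppose ‖u(x) − ∇φ_ℓ(x)‖ ≤ E_ℓ for every ℓ with x ∈ Ω_ℓ. Fix any k with x ∈ Ω_k and suppose |φ_ℓ(x) − φ_k(x)| ≤ δ_ℓ for every ℓ with x ∈ Ω_ℓ. Then the curl-free partition-of-unity approximant s̃ = ∇( Σ_{ℓ=1}^M w_ℓ φ_ℓ ) satisfies ‖u(x) − s̃(x)‖ ≤ max { E_ℓ : x ∈ Ω_ℓ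 } + Σ_{ℓ : x ∈ Ω_ℓ} C_ℓ δ_ℓ. -/
open scoped Classical

/-- Pointwise error estimate for the curl-free partition-of-unity approximant
`s̃ = ∇(Σ_ℓ w_ℓ φ_ℓ)` in `ℝᵈ` (Theorem 4.2, Euclidean curl-free form): local interpolation
errors `E ℓ`, weight-gradient bounds `C ℓ`, and potential mismatches `δ ℓ` combine to give
`‖u − s̃(x)‖ ≤ max{E ℓ : x ∈ Ω ℓ} + Σ_{ℓ : x ∈ Ω ℓ} C ℓ * δ ℓ`. -/
theorem curlfree_pum_pointwise_error (d M : ℕ)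
    (Ω : Set (EuclideanSpace ℝ (Fin d))) (hΩ : IsOpen Ω)
    (x : EuclideanSpace ℝ (Fin d)) (hx : x ∈ Ω)
    (Ωp : Fin M → Set (EuclideanSpace ℝ (Fin d))) (hΩp : ∀ ℓ, IsOpen (Ωp ℓ))
    (w : Fin M → EuclideanSpace ℝ (Fin d) → ℝ)
    (hw_diff : ∀ ℓ, Differentiable ℝ (w ℓ))
    (hw_sum : ∀ y ∈ Ω, ∑ ℓ, w ℓ y = 1)
    (hw_nonneg : ∀ ℓ y, 0 ≤ w ℓ y)
    (hw_supp : ∀ ℓ, tsupport (w ℓ) ⊆ Ωp ℓ)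
    (C : Fin M → ℝ) (hC : ∀ ℓ, ‖gradient (w ℓ) x‖ ≤ C ℓ)
    (φ : Fin M → EuclideanSpace ℝ (Fin d) → ℝ)
    (hφ : ∀ ℓ, Differentiable ℝ (φ ℓ))
    (u : EuclideanSpace ℝ (Fin d))
    (E : Fin M → ℝ)
    (hE : ∀ ℓ, x ∈ Ωp ℓ → ‖u - gradient (φ ℓ) x‖ ≤ E ℓ)
    (k : Fin M) (hk : x ∈ Ωp k)
    (δ : Fin M → ℝ)
    (hδ : ∀ ℓ, x ∈ Ωp ℓ → |φ ℓ x - φ k x| ≤ δ ℓ) :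
    ‖u - gradient (fun y => ∑ ℓ, w ℓ y * φ ℓ y) x‖ ≤
      (Finset.univ.filter fun ℓ => x ∈ Ωp ℓ).sup'
          ⟨k, Finset.mem_filter.mpr ⟨Finset.mem_univ k, hk⟩⟩ E +
        ∑ ℓ ∈ Finset.univ.filter fun ℓ => x ∈ Ωp ℓ, C ℓ * δ ℓ := by
  classical
  set T := InnerProductSpace.toDual ℝ (EuclideanSpace ℝ (Fin d)) with hT
  set S : Finset (Fin M) := Finset.univ.filter fun ℓ => x ∈ Ωp ℓ with hS
  have hkS : k ∈ S := Finset.mem_filter.mpr ⟨Finset.mem_univ k, hk⟩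
  set maxE := S.sup' ⟨k, hkS⟩ E with hmaxE
  -- norm conversion
  have hnorm : ∀ f : EuclideanSpace ℝ (Fin d) → ℝ,
      ‖u - gradient f x‖ = ‖T u - fderiv ℝ f x‖ := by
    intro f
    have h1 : u - gradient f x = T.symm (T u - fderiv ℝ f x) := by
      simp [gradient, map_sub, hT]
    rw [h1, LinearIsometryEquiv.norm_map]
  -- facts outside patches
  have hwz : ∀ ℓ, ℓ ∉ S → w ℓ x = 0 := by
    intro ℓ hℓ
    have hx' : x ∉ tsupport (w ℓ) := fun h => hℓ (Finset.mem_filter.mpr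
      ⟨Finset.mem_univ ℓ, hw_supp ℓ h⟩)
    exact image_eq_zero_of_notMem_tsupport hx'
  have hDwz : ∀ ℓ, ℓ ∉ S → fderiv ℝ (w ℓ) x = 0 := by
    intro ℓ hℓ
    have hx' : x ∉ tsupport (w ℓ) := fun h => hℓ (Finset.mem_filter.mpr
      ⟨Finset.mem_univ ℓ, hw_supp ℓ h⟩)
    have hev : w ℓ =ᶠ[nhds x] 0 := notMem_tsupport_iff_eventuallyEq.mp hx'
    rw [hev.fderiv_eq]
    exact fderiv_const_apply 0
  -- sum of gradients of weights is zero
  have hsum0 : ∑ ℓ, fderiv ℝ (w ℓ) x = 0 := by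
    have h1 : fderiv ℝ (fun y => ∑ ℓ, w ℓ y) x = ∑ ℓ, fderiv ℝ (w ℓ) x :=
      fderiv_fun_sum fun i _ => (hw_diff i).differentiableAt
    have h2 : (fun y => ∑ ℓ, w ℓ y) =ᶠ[nhds x] fun _ => (1 : ℝ) :=
      Filter.eventuallyEq_of_mem (hΩ.mem_nhds hx) hw_sum
    rw [← h1, h2.fderiv_eq, fderiv_const_apply]
  have hDw0 : ∑ ℓ ∈ S, fderiv ℝ (w ℓ) x = 0 := by
    rw [← hsum0]
    exact Finset.sum_subset (Finset.subset_univ S)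
      (fun ℓ _ hℓ => hDwz ℓ hℓ) |>.symm ▸ rfl
  have hw1 : ∑ ℓ ∈ S, w ℓ x = 1 := by
    rw [← hw_sum x hx]
    exact Finset.sum_subset (Finset.subset_univ S)
      (fun ℓ _ hℓ => hwz ℓ hℓ)
  -- derivative of the blended sum
  have hprod : fderiv ℝ (fun y => ∑ ℓ, w ℓ y * φ ℓ y) x
      = ∑ ℓ, (w ℓ x • fderiv ℝ (φ ℓ) x + φ ℓ x • fderiv ℝ (w ℓ) x) := by
    rw [fderiv_fun_sum (A := fun i y => w i y * φ i y) fun i _ =>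
      ((hw_diff i).differentiableAt).mul ((hφ i).differentiableAt)]
    exact Finset.sum_congr rfl fun ℓ _ =>
      fderiv_mul (hw_diff ℓ).differentiableAt (hφ ℓ).differentiableAt
  have hprodS : fderiv ℝ (fun y => ∑ ℓ, w ℓ y * φ ℓ y) x
      = ∑ ℓ ∈ S, (w ℓ x • fderiv ℝ (φ ℓ) x + φ ℓ x • fderiv ℝ (w ℓ) x) := by
    rw [hprod]
    refine (Finset.sum_subset (Finset.subset_univ S) fun ℓ _ hℓ => ?_).symm
    rw [hwz ℓ hℓ, hDwz ℓ hℓ]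
    simp
  -- key decomposition
  have key : T u - fderiv ℝ (fun y => ∑ ℓ, w ℓ y * φ ℓ y) x
      = (∑ ℓ ∈ S, w ℓ x • (T u - fderiv ℝ (φ ℓ) x))
        - ∑ ℓ ∈ S, (φ ℓ x - φ k x) • fderiv ℝ (w ℓ) x := by
    rw [hprodS]
    have e1 : ∑ ℓ ∈ S, w ℓ x • (T u - fderiv ℝ (φ ℓ) x)
        = (∑ ℓ ∈ S, w ℓ x) • T u - ∑ ℓ ∈ S, w ℓ x • fderiv ℝ (φ ℓ) x := by
      rw [Finset.sum_smul, ← Finset.sum_sub_distrib]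
      exact Finset.sum_congr rfl fun ℓ _ => smul_sub _ _ _
    have e2 : ∑ ℓ ∈ S, (φ ℓ x - φ k x) • fderiv ℝ (w ℓ) x
        = ∑ ℓ ∈ S, φ ℓ x • fderiv ℝ (w ℓ) x
          - φ k x • ∑ ℓ ∈ S, fderiv ℝ (w ℓ) x := by
      rw [Finset.smul_sum, ← Finset.sum_sub_distrib]
      exact Finset.sum_congr rfl fun ℓ _ => sub_smul _ _ _
    rw [e1, e2, hw1, hDw0, one_smul, smul_zero, sub_zero, Finset.sum_add_distrib]
    abel
  rw [hnorm, key]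
  refine le_trans (norm_sub_le _ _) (add_le_add ?_ ?_)
  · -- first sum
    calc ‖∑ ℓ ∈ S, w ℓ x • (T u - fderiv ℝ (φ ℓ) x)‖
        ≤ ∑ ℓ ∈ S, ‖w ℓ x • (T u - fderiv ℝ (φ ℓ) x)‖ := norm_sum_le _ _
      _ ≤ ∑ ℓ ∈ S, w ℓ x * maxE := by
          refine Finset.sum_le_sum fun ℓ hℓ => ?_
          rw [norm_smul, Real.norm_eq_abs, abs_of_nonneg (hw_nonneg ℓ x)]
          refine mul_le_mul_of_nonneg_left ?_ (hw_nonneg ℓ x)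
          have hmem : x ∈ Ωp ℓ := (Finset.mem_filter.mp hℓ).2
          calc ‖T u - fderiv ℝ (φ ℓ) x‖ = ‖u - gradient (φ ℓ) x‖ := (hnorm _).symm
            _ ≤ E ℓ := hE ℓ hmem
            _ ≤ maxE := Finset.le_sup' E hℓ
      _ = maxE := by rw [← Finset.sum_mul, hw1, one_mul]
  · -- second sum
    calc ‖∑ ℓ ∈ S, (φ ℓ x - φ k x) • fderiv ℝ (w ℓ) x‖
        ≤ ∑ ℓ ∈ S, ‖(φ ℓ x - φ k x) • fderiv ℝ (w ℓ) x‖ := norm_sum_le _ _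
      _ ≤ ∑ ℓ ∈ S, C ℓ * δ ℓ := by
          refine Finset.sum_le_sum fun ℓ hℓ => ?_
          have hmem : x ∈ Ωp ℓ := (Finset.mem_filter.mp hℓ).2
          rw [norm_smul, Real.norm_eq_abs]
          have hCn : ‖fderiv ℝ (w ℓ) x‖ ≤ C ℓ := by
            have : ‖gradient (w ℓ) x‖ = ‖fderiv ℝ (w ℓ) x‖ := by
              rw [gradient, LinearIsometryEquiv.norm_map]
            rw [← this]; exact hC ℓ
          have hδ0 : (0:ℝ) ≤ δ ℓ := le_trans (abs_nonneg _) (hδ ℓ hmem)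
          calc |φ ℓ x - φ k x| * ‖fderiv ℝ (w ℓ) x‖
              ≤ δ ℓ * C ℓ := mul_le_mul (hδ ℓ hmem) hCn (norm_nonneg _) hδ0
            _ = C ℓ * δ ℓ := mul_comm _ _
end
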